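/- For n ≥ 2 define the n-qubit linear cluster state Lin_n : (Fin n → Fin 2) → ℂ by Lin_n(x) = 2^{-n/2}·(-1)^{∑_{i=0}^{n-2} x_i x_{i+1}}. Fix any qubit index j ∈ Fin n. Then the reduced single-qubit density matrix of Lin_n at qubit j is maximally mixed: the 2×2 matrix ρ with entries ρ(s,t) = ∑_{y} Lin_n(y with j-th entry s) · conj(Lin_n(y with j-th entry t)), where y ranges over assignments to the remaining n-1 qubits, equals (1/2)·I. -/
import Mathlib

noncomputable def Lin (n : ℕ) (x : Fin n → Fin 2) : ℂ :=
  (((Real.sqrt 2)⁻¹ ^ n : ℝ) : ℂ) *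
    (-1 : ℂ) ^ (∑ i : Fin (n - 1),
      ((x ⟨i.1, by have := i.isLt; omega⟩ : Fin 2) : ℕ) *
      ((x ⟨i.1 + 1, by have := i.isLt; omega⟩ : Fin 2) : ℕ))

def insAt (n : ℕ) (j : Fin n) (s : Fin 2) (y : Fin (n - 1) → Fin 2) : Fin n → Fin 2 :=
  fun i =>
    if _ : i.1 < j.1 then y ⟨i.1, by have := j.isLt; omega⟩
    else if _ : i.1 = j.1 then s
    else y ⟨i.1 - 1, by have := i.isLt; omega⟩

namespace Stmt15

def B (n : ℕ) (j : Fin n) (y : Fin (n - 1) → Fin 2) : ℕ :=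
  (if _ : 1 ≤ j.1 then ((y ⟨j.1 - 1, by have := j.isLt; omega⟩ : Fin 2) : ℕ) else 0) +
  (if _ : j.1 + 1 < n then ((y ⟨j.1, by omega⟩ : Fin 2) : ℕ) else 0)

def Eexp (n : ℕ) (x : Fin n → Fin 2) : ℕ :=
  ∑ i : Fin (n - 1),
    ((x ⟨i.1, by have := i.isLt; omega⟩ : Fin 2) : ℕ) *
    ((x ⟨i.1 + 1, by have := i.isLt; omega⟩ : Fin 2) : ℕ)

lemma Lin_def (n : ℕ) (x : Fin n → Fin 2) :
    Lin n x = (((Real.sqrt 2)⁻¹ ^ n : ℝ) : ℂ) * (-1 : ℂ) ^ Eexp n x := rfl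

lemma sum_if_fst (n : ℕ) (j : Fin n) (y : Fin (n - 1) → Fin 2) :
    (∑ i : Fin (n - 1), if i.1 + 1 = j.1 then ((y ⟨i.1, i.isLt⟩ : Fin 2) : ℕ) else 0)
      = if _ : 1 ≤ j.1 then ((y ⟨j.1 - 1, by have := j.isLt; omega⟩ : Fin 2) : ℕ) else 0 := by
  by_cases hj : 1 ≤ j.1
  · rw [dif_pos hj]
    rw [Finset.sum_eq_single (⟨j.1 - 1, by have := j.isLt; omega⟩ : Fin (n - 1))]
    · rw [if_pos (by simp; omega)]
    · intro b _ hb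
      rw [if_neg]
      intro hc
      exact hb (Fin.ext (by simp; omega))
    · intro h; exact absurd (Finset.mem_univ _) h
  · rw [dif_neg hj]
    apply Finset.sum_eq_zero
    intro i _
    rw [if_neg (by omega)]

lemma sum_if_snd (n : ℕ) (j : Fin n) (y : Fin (n - 1) → Fin 2) :
    (∑ i : Fin (n - 1), if i.1 = j.1 then ((y ⟨i.1, i.isLt⟩ : Fin 2) : ℕ) else 0)
      = if _ : j.1 + 1 < n then ((y ⟨j.1, by omega⟩ : Fin 2) : ℕ) else 0 := by
  by_cases hj : j.1 + 1 < n
  · rw [dif_pos hj]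
    rw [Finset.sum_eq_single (⟨j.1, by omega⟩ : Fin (n - 1))]
    · rw [if_pos (by simp)]
    · intro b _ hb
      rw [if_neg]
      intro hc
      exact hb (Fin.ext (by simpa using hc))
    · intro h; exact absurd (Finset.mem_univ _) h
  · rw [dif_neg hj]
    apply Finset.sum_eq_zero
    intro i _
    rw [if_neg (by have := i.isLt; omega)]

lemma Eexp_insAt (n : ℕ) (j : Fin n) (s : Fin 2) (y : Fin (n - 1) → Fin 2) :
    Eexp n (insAt n j s y) = Eexp n (insAt n j 0 y) + (s : ℕ) * B n j y := by
  unfold Eexp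
  have key : ∀ i : Fin (n - 1),
      ((insAt n j s y ⟨i.1, by have := i.isLt; omega⟩ : Fin 2) : ℕ) *
      ((insAt n j s y ⟨i.1 + 1, by have := i.isLt; omega⟩ : Fin 2) : ℕ)
      = ((insAt n j 0 y ⟨i.1, by have := i.isLt; omega⟩ : Fin 2) : ℕ) *
        ((insAt n j 0 y ⟨i.1 + 1, by have := i.isLt; omega⟩ : Fin 2) : ℕ)
        + (s : ℕ) * ((if i.1 + 1 = j.1 then ((y ⟨i.1, i.isLt⟩ : Fin 2) : ℕ) else 0)
            + (if i.1 = j.1 then ((y ⟨i.1, i.isLt⟩ : Fin 2) : ℕ) else 0)) := by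
    intro i
    rcases Nat.lt_trichotomy (i.1 + 1) j.1 with h | h | h
    · simp only [insAt]
      rw [dif_pos (show i.1 < j.1 by omega), dif_pos (show i.1 + 1 < j.1 by omega),
        dif_pos (show i.1 < j.1 by omega), dif_pos (show i.1 + 1 < j.1 by omega)]
      simp [show ¬(i.1 + 1 = j.1) by omega, show ¬(i.1 = j.1) by omega]
    · simp only [insAt]
      rw [dif_pos (show i.1 < j.1 by omega), dif_neg (show ¬(i.1 + 1 < j.1) by omega),
        dif_pos h, dif_pos (show i.1 < j.1 by omega),
        dif_neg (show ¬(i.1 + 1 < j.1) by omega), dif_pos h]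
      simp [h, show ¬(i.1 = j.1) by omega]
      try ring
    · rcases Nat.lt_trichotomy i.1 j.1 with h2 | h2 | h2
      · omega
      · simp only [insAt]
        rw [dif_neg (show ¬(i.1 < j.1) by omega), dif_pos h2,
          dif_neg (show ¬(i.1 + 1 < j.1) by omega),
          dif_neg (show ¬(i.1 + 1 = j.1) by omega),
          dif_neg (show ¬(i.1 < j.1) by omega), dif_pos h2,
          dif_neg (show ¬(i.1 + 1 < j.1) by omega),
          dif_neg (show ¬(i.1 + 1 = j.1) by omega)]
        simp [show ¬(i.1 + 1 = j.1) by omega, h2]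
        try ring
      · simp only [insAt]
        rw [dif_neg (show ¬(i.1 < j.1) by omega), dif_neg (show ¬(i.1 = j.1) by omega),
          dif_neg (show ¬(i.1 + 1 < j.1) by omega), dif_neg (show ¬(i.1 + 1 = j.1) by omega),
          dif_neg (show ¬(i.1 < j.1) by omega), dif_neg (show ¬(i.1 = j.1) by omega),
          dif_neg (show ¬(i.1 + 1 < j.1) by omega), dif_neg (show ¬(i.1 + 1 = j.1) by omega)]
        simp [show ¬(i.1 + 1 = j.1) by omega, show ¬(i.1 = j.1) by omega]
        try ring
  rw [Finset.sum_congr rfl fun i _ => key i, Finset.sum_add_distrib, ← Finset.mul_sum]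
  congr 1
  rw [Finset.sum_add_distrib, sum_if_fst, sum_if_snd]
  rfl

lemma conj_Lin (n : ℕ) (x : Fin n → Fin 2) :
    (starRingEnd ℂ) (Lin n x) = Lin n x := by
  rw [Lin_def, map_mul, map_pow, map_neg, map_one, Complex.conj_ofReal]

lemma term_eq (n : ℕ) (j : Fin n) (s t : Fin 2) (y : Fin (n - 1) → Fin 2) :
    Lin n (insAt n j s y) * (starRingEnd ℂ) (Lin n (insAt n j t y))
      = (((2 : ℝ)⁻¹ ^ n : ℝ) : ℂ) * (-1 : ℂ) ^ (((s : ℕ) + (t : ℕ)) * B n j y) := by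
  rw [conj_Lin, Lin_def, Lin_def]
  have hc : ((Real.sqrt 2)⁻¹ ^ n : ℝ) * ((Real.sqrt 2)⁻¹ ^ n : ℝ) = (2 : ℝ)⁻¹ ^ n := by
    rw [← mul_pow, ← mul_inv, Real.mul_self_sqrt (by norm_num)]
  calc (((Real.sqrt 2)⁻¹ ^ n : ℝ) : ℂ) * (-1 : ℂ) ^ Eexp n (insAt n j s y) *
        ((((Real.sqrt 2)⁻¹ ^ n : ℝ) : ℂ) * (-1 : ℂ) ^ Eexp n (insAt n j t y))
      = ((((Real.sqrt 2)⁻¹ ^ n : ℝ) * ((Real.sqrt 2)⁻¹ ^ n : ℝ) : ℝ) : ℂ) *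
          (-1 : ℂ) ^ (Eexp n (insAt n j s y) + Eexp n (insAt n j t y)) := by
        push_cast; rw [pow_add]; ring
    _ = (((2 : ℝ)⁻¹ ^ n : ℝ) : ℂ) * (-1 : ℂ) ^ (((s : ℕ) + (t : ℕ)) * B n j y) := by
        rw [hc, Eexp_insAt n j s y, Eexp_insAt n j t y]
        congr 1
        have h : Eexp n (insAt n j 0 y) + (s : ℕ) * B n j y +
            (Eexp n (insAt n j 0 y) + (t : ℕ) * B n j y)
            = 2 * (Eexp n (insAt n j 0 y)) + ((s : ℕ) + (t : ℕ)) * B n j y := by ring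
        rw [h, pow_add, pow_mul, neg_one_sq, one_pow, one_mul]

lemma sum_flip_zero {m : ℕ} (k : Fin m) (f : (Fin m → Fin 2) → ℂ)
    (hf : ∀ y, f (Function.update y k (y k + 1)) = - f y) :
    ∑ y : Fin m → Fin 2, f y = 0 := by
  have hb2 : ∀ b : Fin 2, b + 1 + 1 = b := by decide
  have hinv : Function.Involutive
      (fun y : Fin m → Fin 2 => Function.update y k (y k + 1)) := by
    intro y
    funext i
    by_cases h : i = k
    · subst h
      simp [Function.update_self, hb2]
    · simp [Function.update_of_ne h]
  have h1 : ∑ y : Fin m → Fin 2, f (Function.update y k (y k + 1))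
      = ∑ y : Fin m → Fin 2, f y :=
    Fintype.sum_bijective _ hinv.bijective _ f (fun y => rfl)
  have h2 : ∑ y : Fin m → Fin 2, f y = - ∑ y : Fin m → Fin 2, f y := by
    conv_lhs => rw [← h1]
    rw [← Finset.sum_neg_distrib]
    exact Finset.sum_congr rfl fun y _ => hf y
  have h3 : (2 : ℂ) * ∑ y : Fin m → Fin 2, f y = 0 := by linear_combination h2
  exact (mul_eq_zero.mp h3).resolve_left two_ne_zero

lemma flip_pow (b : Fin 2) : (-1 : ℂ) ^ ((b + 1 : Fin 2) : ℕ) = - (-1 : ℂ) ^ (b : ℕ) := by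
  have hb : (b : ℕ) = 0 ∨ (b : ℕ) = 1 := by omega
  have hv : ((b + 1 : Fin 2) : ℕ) = ((b : ℕ) + 1) % 2 := rfl
  rcases hb with h | h <;> rw [hv, h] <;> norm_num

lemma B_hj (n : ℕ) (j : Fin n) (hj : 1 ≤ j.1) (hk : j.1 - 1 < n - 1) :
    ∃ R : (Fin (n - 1) → Fin 2) → ℕ,
      (∀ y, B n j y = ((y ⟨j.1 - 1, hk⟩ : Fin 2) : ℕ) + R y) ∧
      (∀ y v, R (Function.update y (⟨j.1 - 1, hk⟩ : Fin (n - 1)) v) = R y) := by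
  refine ⟨fun y => if _ : j.1 + 1 < n then ((y ⟨j.1, by omega⟩ : Fin 2) : ℕ) else 0,
    fun y => ?_, fun y v => ?_⟩
  · unfold B
    rw [dif_pos hj]
  · simp only
    by_cases h2 : j.1 + 1 < n
    · rw [dif_pos h2, dif_pos h2]
      congr 1
      apply Function.update_of_ne
      intro hc
      rw [Fin.ext_iff] at hc
      simp only at hc
      omega
    · rw [dif_neg h2, dif_neg h2]

lemma B_hj0 (n : ℕ) (hn : 2 ≤ n) (j : Fin n) (hj0 : j.1 = 0) (h0 : (0 : ℕ) < n - 1) :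
    ∀ z : Fin (n - 1) → Fin 2, B n j z = ((z ⟨0, h0⟩ : Fin 2) : ℕ) := by
  intro z
  unfold B
  rw [dif_neg (by omega), dif_pos (by omega)]
  simp only [zero_add]
  congr 1
  exact congrArg z (Fin.ext hj0)

lemma sum_B_zero (n : ℕ) (hn : 2 ≤ n) (j : Fin n) :
    ∑ y : Fin (n - 1) → Fin 2, (-1 : ℂ) ^ B n j y = 0 := by
  by_cases hj : 1 ≤ j.1
  · have hk : j.1 - 1 < n - 1 := by have := j.isLt; omega
    obtain ⟨R, hB, hRu⟩ := B_hj n j hj hk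
    apply sum_flip_zero (⟨j.1 - 1, hk⟩ : Fin (n - 1))
    intro y
    rw [hB, hB, hRu, Function.update_self, pow_add, pow_add, flip_pow]
    ring
  · have hj0 : j.1 = 0 := by omega
    have h0 : (0 : ℕ) < n - 1 := by omega
    apply sum_flip_zero (⟨0, h0⟩ : Fin (n - 1))
    intro y
    rw [B_hj0 n hn j hj0 h0, B_hj0 n hn j hj0 h0, Function.update_self, flip_pow]

end Stmt15

open Stmt15 in
/-- For `n ≥ 2` and any qubit `j`, the reduced single-qubit density
matrix of the `n`-qubit linear cluster state at qubit `j`, with entries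
`ρ(s,t) = ∑_y Lin_n(y with j-th entry s)·conj(Lin_n(y with j-th entry t))`,
is maximally mixed: `ρ = (1/2)·I`. -/
theorem stmt_15 (n : ℕ) (hn : 2 ≤ n) (j : Fin n) :
    (Matrix.of fun s t : Fin 2 =>
        ∑ y : Fin (n - 1) → Fin 2,
          Lin n (insAt n j s y) * (starRingEnd ℂ) (Lin n (insAt n j t y)))
      = (1 / 2 : ℂ) • (1 : Matrix (Fin 2) (Fin 2) ℂ) := by
  ext s t
  simp only [Matrix.of_apply, Matrix.smul_apply, Matrix.one_apply, smul_eq_mul]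
  rw [Finset.sum_congr rfl fun y _ => term_eq n j s t y, ← Finset.mul_sum]
  by_cases hst : s = t
  · subst hst
    have hone : ∀ y : Fin (n - 1) → Fin 2,
        (-1 : ℂ) ^ (((s : ℕ) + (s : ℕ)) * B n j y) = 1 := by
      intro y
      have h : ((s : ℕ) + (s : ℕ)) * B n j y = 2 * ((s : ℕ) * B n j y) := by ring
      rw [h, pow_mul, neg_one_sq, one_pow]
    rw [Finset.sum_congr rfl fun y _ => hone y, Finset.sum_const, Finset.card_univ]
    simp only [Fintype.card_fun, Fintype.card_fin, nsmul_eq_mul, mul_one, if_pos rfl]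
    obtain ⟨m, rfl⟩ : ∃ m, n = m + 1 := ⟨n - 1, by omega⟩
    simp only [Nat.add_sub_cancel]
    push_cast
    have h2 : ((2 : ℂ)⁻¹) ^ m * (2 : ℂ) ^ m = 1 := by
      rw [← mul_pow]; norm_num
    calc (2 : ℂ)⁻¹ ^ (m + 1) * 2 ^ m = ((2 : ℂ)⁻¹ ^ m * 2 ^ m) * 2⁻¹ := by ring
      _ = 1 / 2 * 1 := by rw [h2]; norm_num
  · have hsum : ((s : ℕ) + (t : ℕ)) = 1 := by
      fin_cases s <;> fin_cases t <;> simp_all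
    simp only [hsum, one_mul]
    rw [sum_B_zero n hn j, mul_zero]
    simp [hst]
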